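/- For every natural number N, the sum ∑_{m=0}^{N} 1/((1+m)²·(1+(N-m))²) is at most 15/(1+N)². -/

import Mathlib

lemma basel_aux (n : ℕ) :
    ∑ m ∈ Finset.range (n + 1), (1 : ℝ) / (1 + (m : ℝ)) ^ 2
      ≤ 5 / 3 - 2 / (2 * (n : ℝ) + 3) := by
  induction n with
  | zero => norm_num
  | succ n ih =>
    rw [Finset.sum_range_succ]
    have hn : (0 : ℝ) ≤ (n : ℝ) := Nat.cast_nonneg n
    push_cast
    have h1 : (0:ℝ) < 2 * (n:ℝ) + 3 := by linarith
    have h2 : (0:ℝ) < 2 * (n:ℝ) + 5 := by linarith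
    have h3 : (0:ℝ) < (1 + ((n:ℝ) + 1)) ^ 2 := by positivity
    have key : (1:ℝ) / (1 + ((n:ℝ) + 1)) ^ 2
        ≤ 2 / (2 * (n:ℝ) + 3) - 2 / (2 * (n:ℝ) + 5) := by
      rw [div_sub_div _ _ (ne_of_gt h1) (ne_of_gt h2), div_le_div_iff₀ h3 (by positivity)]
      ring_nf
      nlinarith
    have heq : (2:ℝ) / (2 * ((n:ℝ) + 1) + 3) = 2 / (2 * (n:ℝ) + 5) := by ring_nf
    rw [heq]
    linarith

lemma basel_bound (n : ℕ) :
    ∑ m ∈ Finset.range (n + 1), (1 : ℝ) / (1 + (m : ℝ)) ^ 2 ≤ 5 / 3 := by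
  have h := basel_aux n
  have : (0:ℝ) < 2 * (n:ℝ) + 3 := by positivity
  have : (0:ℝ) ≤ 2 / (2 * (n:ℝ) + 3) := by positivity
  linarith

/-- For every natural number `N`,
`∑_{m=0}^{N} 1/((1+m)²(1+(N-m))²) ≤ 15/(1+N)²`. -/
theorem convolution_weight_sum_bound (N : ℕ) :
    ∑ m ∈ Finset.range (N + 1),
        (1 : ℝ) / ((1 + (m : ℝ)) ^ 2 * (1 + ((N - m : ℕ) : ℝ)) ^ 2)
      ≤ 15 / (1 + (N : ℝ)) ^ 2 := by
  have hNpos : (0:ℝ) < 1 + (N:ℝ) := by positivity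
  -- pointwise bound
  have step : ∀ m ∈ Finset.range (N + 1),
      (1 : ℝ) / ((1 + (m : ℝ)) ^ 2 * (1 + ((N - m : ℕ) : ℝ)) ^ 2)
        ≤ 4 / (1 + (N:ℝ)) ^ 2 *
          ((1:ℝ) / (1 + (m : ℝ)) ^ 2 + (1:ℝ) / (1 + ((N - m : ℕ) : ℝ)) ^ 2) := by
    intro m hm
    rw [Finset.mem_range] at hm
    have hmN : m ≤ N := Nat.lt_succ_iff.mp hm
    set a : ℝ := (m : ℝ) with ha
    have hb : ((N - m : ℕ) : ℝ) = (N : ℝ) - a := by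
      rw [ha]; exact Nat.cast_sub hmN
    rw [hb]
    set b : ℝ := (N : ℝ) - a with hbdef
    have ha0 : (0:ℝ) ≤ a := Nat.cast_nonneg m
    have hb0 : (0:ℝ) ≤ b := by
      rw [hbdef]
      have : (m:ℝ) ≤ (N:ℝ) := Nat.cast_le.mpr hmN
      rw [ha]; linarith
    have hA : (0:ℝ) < (1 + a) ^ 2 := by positivity
    have hB : (0:ℝ) < (1 + b) ^ 2 := by positivity
    have hrhs : 4 / (1 + (N:ℝ)) ^ 2 * ((1:ℝ) / (1 + a) ^ 2 + (1:ℝ) / (1 + b) ^ 2)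
        = (4 * ((1 + a) ^ 2 + (1 + b) ^ 2)) /
          ((1 + (N:ℝ)) ^ 2 * ((1 + a) ^ 2 * (1 + b) ^ 2)) := by
      field_simp
      ring
    rw [hrhs, div_le_div_iff₀ (by positivity) (by positivity)]
    have hab : a + b = (N:ℝ) := by rw [hbdef]; ring
    have h4 : (1 + (N:ℝ)) ^ 2 ≤ 4 * ((1 + a) ^ 2 + (1 + b) ^ 2) := by
      rw [← hab]
      nlinarith [sq_nonneg (a - b)]
    nlinarith [mul_le_mul_of_nonneg_right h4 (mul_pos hA hB).le]
  calc ∑ m ∈ Finset.range (N + 1),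
        (1 : ℝ) / ((1 + (m : ℝ)) ^ 2 * (1 + ((N - m : ℕ) : ℝ)) ^ 2)
      ≤ ∑ m ∈ Finset.range (N + 1),
          4 / (1 + (N:ℝ)) ^ 2 *
            ((1:ℝ) / (1 + (m : ℝ)) ^ 2 + (1:ℝ) / (1 + ((N - m : ℕ) : ℝ)) ^ 2) :=
        Finset.sum_le_sum step
    _ = 4 / (1 + (N:ℝ)) ^ 2 *
          (∑ m ∈ Finset.range (N + 1), (1:ℝ) / (1 + (m : ℝ)) ^ 2
           + ∑ m ∈ Finset.range (N + 1), (1:ℝ) / (1 + ((N - m : ℕ) : ℝ)) ^ 2) := by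
        rw [← Finset.mul_sum, ← Finset.sum_add_distrib]
    _ = 4 / (1 + (N:ℝ)) ^ 2 *
          (∑ m ∈ Finset.range (N + 1), (1:ℝ) / (1 + (m : ℝ)) ^ 2
           + ∑ m ∈ Finset.range (N + 1), (1:ℝ) / (1 + (m : ℝ)) ^ 2) := by
        congr 2
        have := Finset.sum_range_reflect (fun j => (1:ℝ) / (1 + (j : ℝ)) ^ 2) (N + 1)
        simpa using this
    _ ≤ 4 / (1 + (N:ℝ)) ^ 2 * (5 / 3 + 5 / 3) := by
        have hb := basel_bound N
        have hc : (0:ℝ) ≤ 4 / (1 + (N:ℝ)) ^ 2 := by positivity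
        apply mul_le_mul_of_nonneg_left _ hc
        linarith
    _ ≤ 15 / (1 + (N : ℝ)) ^ 2 := by
        rw [div_mul_eq_mul_div, div_le_div_iff₀ (by positivity) (by positivity)]
        nlinarith [sq_nonneg (1 + (N:ℝ))]
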